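/- Let f, g : [0,T] → ℝ be continuous, c, η > 0 with η > c, and suppose f(t) ≤ g(t) + c·∫ₜᵀ f(r)·e^{-η(r-t)} dr for all t ∈ [0,T]. Then f(t) ≤ g(t) + c·∫ₜᵀ g(r)·e^{-(η-c)(r-t)} dr for all t ∈ [0,T]. -/

import Mathlib

open MeasureTheory Real

theorem stmt_2 (f g : ℝ → ℝ) (T c η : ℝ) (hT : 0 < T)
    (hc : 0 < c) (hη : 0 < η) (hηc : η > c)
    (hf : ContinuousOn f (Set.Icc 0 T)) (hg : ContinuousOn g (Set.Icc 0 T))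
    (hineq : ∀ t ∈ Set.Icc (0:ℝ) T,
      f t ≤ g t + c * ∫ r in t..T, f r * Real.exp (-η * (r - t))) :
    ∀ t ∈ Set.Icc (0:ℝ) T,
      f t ≤ g t + c * ∫ r in t..T, g r * Real.exp (-(η - c) * (r - t)) := by
  have hIcc : Set.uIcc (0:ℝ) T = Set.Icc 0 T := Set.uIcc_of_le hT.le
  set h : ℝ → ℝ := fun r => f r * Real.exp (-η * r) with hh
  set G : ℝ → ℝ := fun r => g r * Real.exp ((c - η) * r) with hG
  have hhcont : ContinuousOn h (Set.Icc 0 T) :=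
    hf.mul ((Real.continuous_exp.comp (continuous_const.mul continuous_id)).continuousOn)
  have hGcont : ContinuousOn G (Set.Icc 0 T) :=
    hg.mul ((Real.continuous_exp.comp (continuous_const.mul continuous_id)).continuousOn)
  have hhint : ∀ a ∈ Set.Icc (0:ℝ) T, ∀ b ∈ Set.Icc (0:ℝ) T,
      IntervalIntegrable h volume a b := fun a ha b hb =>
    (hhcont.mono (Set.uIcc_subset_Icc ha hb)).intervalIntegrable
  have hGint : ∀ a ∈ Set.Icc (0:ℝ) T, ∀ b ∈ Set.Icc (0:ℝ) T,
      IntervalIntegrable G volume a b := fun a ha b hb =>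
    (hGcont.mono (Set.uIcc_subset_Icc ha hb)).intervalIntegrable
  set u : ℝ → ℝ := fun t => ∫ r in t..T, h r with hu
  have hucont : ContinuousOn u (Set.Icc 0 T) := by
    rw [← hIcc]
    exact intervalIntegral.continuousOn_primitive_interval_left
      (by rw [hIcc]; exact hhcont.integrableOn_compact isCompact_Icc)
  -- key rewriting of the hypothesis
  have hineq' : ∀ t ∈ Set.Icc (0:ℝ) T, f t ≤ g t + c * (Real.exp (η * t) * u t) := by
    intro t ht
    have : (∫ r in t..T, f r * Real.exp (-η * (r - t)))
        = Real.exp (η * t) * u t := by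
      have : ∀ r, f r * Real.exp (-η * (r - t))
          = Real.exp (η * t) * (f r * Real.exp (-η * r)) := by
        intro r
        rw [mul_comm (Real.exp (η * t)), mul_assoc, ← Real.exp_add]
        ring_nf
      simp only [this]
      exact intervalIntegral.integral_const_mul _ _
    rw [← this]
    exact hineq t ht
  set φ : ℝ → ℝ := fun t => Real.exp (c * t) * u t + ∫ r in (0:ℝ)..t, G r with hφ
  have hT0 : (0:ℝ) ∈ Set.Icc (0:ℝ) T := Set.left_mem_Icc.2 hT.le
  have hTT : T ∈ Set.Icc (0:ℝ) T := Set.right_mem_Icc.2 hT.le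
  have hφcont : ContinuousOn φ (Set.Icc 0 T) := by
    apply ContinuousOn.add
    · exact ((Real.continuous_exp.comp (continuous_const.mul continuous_id)).continuousOn).mul
        hucont
    · rw [← hIcc]
      exact intervalIntegral.continuousOn_primitive_interval'
        ((hGint 0 hT0 T hTT)) (by rw [hIcc]; exact hT0)
  have hφderiv : ∀ x ∈ Set.Ioo (0:ℝ) T,
      HasDerivAt φ (c * Real.exp (c * x) * u x - Real.exp (c * x) * h x + G x) x := by
    intro x hx
    have hxIcc : x ∈ Set.Icc (0:ℝ) T := Set.Ioo_subset_Icc_self hx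
    have hnhds : Set.Icc (0:ℝ) T ∈ nhds x := Icc_mem_nhds hx.1 hx.2
    have hhx : ContinuousAt h x := hhcont.continuousAt hnhds
    have hGx : ContinuousAt G x := hGcont.continuousAt hnhds
    have hmeas : StronglyMeasurableAtFilter h (nhds x) :=
      ⟨Set.Icc 0 T, hnhds, hhcont.aestronglyMeasurable measurableSet_Icc⟩
    have hmeasG : StronglyMeasurableAtFilter G (nhds x) :=
      ⟨Set.Icc 0 T, hnhds, hGcont.aestronglyMeasurable measurableSet_Icc⟩
    have hdu : HasDerivAt u (-h x) x :=
      intervalIntegral.integral_hasDerivAt_left (hhint x hxIcc T hTT) hmeas hhx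
    have hde : HasDerivAt (fun t => Real.exp (c * t)) (c * Real.exp (c * x)) x := by
      have := (Real.hasDerivAt_exp (c * x)).comp x ((hasDerivAt_id x).const_mul c)
      exact this.congr_deriv (by ring)
    have hdInt : HasDerivAt (fun t => ∫ r in (0:ℝ)..t, G r) (G x) x :=
      intervalIntegral.integral_hasDerivAt_right (hGint 0 hT0 x hxIcc) hmeasG hGx
    have := (hde.mul hdu).add hdInt
    exact this.congr_deriv (by ring)
  have hφmono : MonotoneOn φ (Set.Icc 0 T) := by
    apply monotoneOn_of_hasDerivWithinAt_nonneg (convex_Icc 0 T) hφcont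
      (f' := fun x => c * Real.exp (c * x) * u x - Real.exp (c * x) * h x + G x)
    · intro x hx
      rw [interior_Icc] at hx
      exact (hφderiv x hx).hasDerivWithinAt
    · intro x hx
      rw [interior_Icc] at hx
      have hxIcc : x ∈ Set.Icc (0:ℝ) T := Set.Ioo_subset_Icc_self hx
      have h1 := hineq' x hxIcc
      have e1 : Real.exp (c * x) * Real.exp (-η * x) = Real.exp ((c - η) * x) := by
        rw [← Real.exp_add]; ring_nf
      have e2 : Real.exp ((c - η) * x) * Real.exp (η * x) = Real.exp (c * x) := by
        rw [← Real.exp_add]; ring_nf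
      have key : Real.exp (c * x) * h x ≤ c * Real.exp (c * x) * u x + G x := by
        have hmul := mul_le_mul_of_nonneg_left h1 (Real.exp_pos ((c - η) * x)).le
        calc Real.exp (c * x) * h x
            = (Real.exp (c * x) * Real.exp (-η * x)) * f x := by
              simp only [hh]; ring
          _ = Real.exp ((c - η) * x) * f x := by rw [e1]
          _ ≤ Real.exp ((c - η) * x) * (g x + c * (Real.exp (η * x) * u x)) := hmul
          _ = c * Real.exp (c * x) * u x + G x := by
              simp only [hG, mul_add]
              rw [show Real.exp ((c - η) * x) * (c * (Real.exp (η * x) * u x))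
                  = c * (Real.exp ((c - η) * x) * Real.exp (η * x)) * u x by ring, e2]
              ring
      linarith
  intro t ht
  have hφle : φ t ≤ φ T := hφmono ht hTT ht.2
  have huT : u T = 0 := by simp [hu]
  have hsplit : (∫ r in (0:ℝ)..t, G r) + (∫ r in t..T, G r) = ∫ r in (0:ℝ)..T, G r :=
    intervalIntegral.integral_add_adjacent_intervals (hGint 0 hT0 t ht) (hGint t ht T hTT)
  have hkey : Real.exp (c * t) * u t ≤ ∫ r in t..T, G r := by
    have : φ T = ∫ r in (0:ℝ)..T, G r := by simp [hφ, huT]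
    rw [this] at hφle
    simp only [hφ] at hφle
    linarith
  -- rewrite the goal integral
  have hgoalint : (∫ r in t..T, g r * Real.exp (-(η - c) * (r - t)))
      = Real.exp ((η - c) * t) * ∫ r in t..T, G r := by
    have : ∀ r, g r * Real.exp (-(η - c) * (r - t))
        = Real.exp ((η - c) * t) * G r := by
      intro r
      simp only [hG]
      rw [mul_comm (Real.exp ((η - c) * t)), mul_assoc, ← Real.exp_add]
      ring_nf
    simp only [this]
    exact intervalIntegral.integral_const_mul _ _
  rw [hgoalint]
  have h1 := hineq' t ht
  have e3 : Real.exp ((η - c) * t) * Real.exp (c * t) = Real.exp (η * t) := by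
    rw [← Real.exp_add]; ring_nf
  have hmul := mul_le_mul_of_nonneg_left hkey
    (mul_nonneg hc.le (Real.exp_pos ((η - c) * t)).le)
  calc f t ≤ g t + c * (Real.exp (η * t) * u t) := h1
    _ = g t + c * Real.exp ((η - c) * t) * (Real.exp (c * t) * u t) := by
        rw [show c * Real.exp ((η - c) * t) * (Real.exp (c * t) * u t)
            = c * ((Real.exp ((η - c) * t) * Real.exp (c * t)) * u t) by ring, e3]
    _ ≤ g t + c * Real.exp ((η - c) * t) * ∫ r in t..T, G r := by linarith
    _ = g t + c * (Real.exp ((η - c) * t) * ∫ r in t..T, G r) := by ring
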